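/- Pointwise version of uniqueness of connection coefficients: let θ¹,…,θⁿ be a basis of the dual of an n-dimensional real vector space V and suppose (aⱼⁱ) and (bⱼⁱ) are families of linear functionals on V with aᵢʲ = −aⱼⁱ, bᵢʲ = −bⱼⁱ, and ∑ⱼ θʲ ∧ aⱼⁱ = ∑ⱼ θʲ ∧ bⱼⁱ for every i. Then aⱼⁱ = bⱼⁱ for all i, j. -/

import Mathlib

/-- Pointwise uniqueness of connection coefficients: if `θ` is a basis of the
dual of an `n`-dimensional real vector space `V`, and `a j i`, `b j i` are
antisymmetric families of linear functionals with
`∑ j, θ j ∧ a j i = ∑ j, θ j ∧ b j i` for every `i`, then `a = b`. -/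
theorem stmt_4 {V : Type*} [AddCommGroup V] [Module ℝ V]
    {n : ℕ} (hdim : Module.finrank ℝ V = n)
    (θ : Fin n → (V →ₗ[ℝ] ℝ))
    (hθ : LinearIndependent ℝ θ)
    (hspan : ⊤ ≤ Submodule.span ℝ (Set.range θ))
    (a b : Fin n → Fin n → (V →ₗ[ℝ] ℝ))
    (ha : ∀ i j, a i j = - a j i) (hb : ∀ i j, b i j = - b j i)
    (hwedge : ∀ i, ∀ v w : V,
      ∑ j, (θ j v * a j i w - θ j w * a j i v)
        = ∑ j, (θ j v * b j i w - θ j w * b j i v)) :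
    ∀ i j, a j i = b j i := by
  rcases Nat.eq_zero_or_pos n with h0 | hpos
  · subst h0; exact fun i => i.elim0
  have hfd : FiniteDimensional ℝ V := Module.finite_of_finrank_pos (hdim ▸ hpos)
  let B : Module.Basis (Fin n) ℝ (Module.Dual ℝ V) := Module.Basis.mk hθ hspan
  let e : Module.Basis (Fin n) ℝ V := B.dualBasis.map (Module.evalEquiv ℝ V).symm
  have he : ∀ j k, θ j (e k) = if j = k then 1 else 0 := by
    intro j k
    have h1 : Module.evalEquiv ℝ V (e k) = B.dualBasis k := by
      simp [e, Module.Basis.map_apply]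
    have h2 : θ j (e k) = Module.evalEquiv ℝ V (e k) (θ j) := by
      simp [Module.evalEquiv_apply]
    rw [h2, h1]
    have : θ j = B j := (Module.Basis.mk_apply hθ hspan j).symm
    rw [this, B.dualBasis_apply_self]
  set f : Fin n → Fin n → Fin n → ℝ :=
    fun p i q => a p i (e q) - b p i (e q) with hf
  have hanti : ∀ p i q, f p i q = - f i p q := by
    intro p i q
    simp only [hf, ha p i, hb p i, LinearMap.neg_apply]
    ring
  have hsym : ∀ p i q, f p i q = f q i p := by
    intro p i q
    have h := hwedge i (e p) (e q)
    have key : ∑ j, (θ j (e p) * f j i q - θ j (e q) * f j i p) = 0 := by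
      simp only [hf]
      have : ∀ j, θ j (e p) * (a j i (e q) - b j i (e q))
          - θ j (e q) * (a j i (e p) - b j i (e p))
          = (θ j (e p) * a j i (e q) - θ j (e q) * a j i (e p))
            - (θ j (e p) * b j i (e q) - θ j (e q) * b j i (e p)) := by
        intro j; ring
      simp only [this, Finset.sum_sub_distrib, h, sub_self]
    rw [Finset.sum_sub_distrib] at key
    have h1 : ∑ j, θ j (e p) * f j i q = f p i q := by
      simp [he, ite_mul, Finset.sum_ite_eq, eq_comm]
    have h2 : ∑ j, θ j (e q) * f j i p = f q i p := by
      simp [he, ite_mul, Finset.sum_ite_eq, eq_comm]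
    rw [h1, h2] at key
    linarith
  have hzero : ∀ p i q, f p i q = 0 := by
    intro p i q
    have : f p i q = - f p i q := by
      calc f p i q = f q i p := hsym p i q
        _ = - f i q p := hanti q i p
        _ = - f p q i := by rw [hsym i q p]
        _ = f q p i := by rw [hanti q p i]
        _ = f i p q := hsym q p i
        _ = - f p i q := by rw [hanti i p q]
    linarith
  intro i j
  apply Module.Basis.ext e
  intro k
  have := hzero j i k
  simp only [hf] at this
  linarith
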